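/- Let p, s, t be real numbers, and define the sequence G_n(p,u) for real u by G_0(p,u) = 1 and G_n(p,u) = (p/n) Σ_{k=1}^{n} (−1)^{k+1} B_k(u) G_{n−k}(p,u) for n ≥ 1. Then for every n ≥ 0, G_n(p, s+t) = Σ_{k=0}^{n} C(p−n+k, k) · G_{n−k}(p, s) · t^k, where C(x,k) denotes the generalized binomial coefficient. -/

import Mathlib

open Finset

/-- The `k`-th Bernoulli polynomial evaluated at a real number `t`
(generating function `u e^{tu}/(e^u - 1)`, so `B 1 t = t - 1/2`). -/
noncomputable def bern (k : ℕ) (t : ℝ) : ℝ :=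
  Polynomial.aeval t (Polynomial.bernoulli k)

/-- The generalized binomial coefficient `C(x, k) = x(x-1)⋯(x-k+1)/k!`. -/
noncomputable def genBinom (x : ℝ) (k : ℕ) : ℝ :=
  (∏ i ∈ Finset.range k, (x - (i : ℝ))) / (Nat.factorial k : ℝ)




lemma genBinom_zero (x : ℝ) : genBinom x 0 = 1 := by simp [genBinom]

lemma genBinom_pascal (q : ℝ) (r : ℕ) :
    genBinom (q+1) (r+1) = genBinom q (r+1) + genBinom q r := by
  have e : ∀ i ∈ range r, (q+1) - (((i+1:ℕ)):ℝ) = q - i := fun i _ => by push_cast; ring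
  have h1 : ∏ i ∈ range (r+1), ((q+1) - (i:ℝ)) = (q+1) * ∏ i ∈ range r, (q - (i:ℝ)) := by
    rw [Finset.prod_range_succ', Finset.prod_congr rfl e]
    push_cast; ring
  have h2 : ∏ i ∈ range (r+1), (q - (i:ℝ)) = (∏ i ∈ range r, (q - (i:ℝ))) * (q - r) :=
    Finset.prod_range_succ _ _
  have hf : (Nat.factorial (r+1) : ℝ) = (r+1) * Nat.factorial r := by
    push_cast [Nat.factorial_succ]; ring
  have hfr : (Nat.factorial r : ℝ) ≠ 0 := by positivity
  have hr1 : ((r:ℝ)+1) ≠ 0 := by positivity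
  simp only [genBinom, h1, h2, hf]
  field_simp
  ring

lemma genBinom_mul (q : ℝ) (r : ℕ) :
    ((r:ℝ)+1) * genBinom q (r+1) = q * genBinom (q-1) r := by
  have e : ∀ i ∈ range r, q - (((i+1:ℕ)):ℝ) = (q-1) - i := fun i _ => by push_cast; ring
  have h1 : ∏ i ∈ range (r+1), (q - (i:ℝ)) = q * ∏ i ∈ range r, ((q-1) - (i:ℝ)) := by
    rw [Finset.prod_range_succ', Finset.prod_congr rfl e]
    push_cast; ring
  have hf : (Nat.factorial (r+1) : ℝ) = (r+1) * Nat.factorial r := by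
    push_cast [Nat.factorial_succ]; ring
  have hfr : (Nat.factorial r : ℝ) ≠ 0 := by positivity
  have hr1 : ((r:ℝ)+1) ≠ 0 := by positivity
  simp only [genBinom, h1, hf]
  field_simp




lemma genBinom_alt_sum : ∀ (i r : ℕ) (q : ℝ),
    ∑ d ∈ range (r+1), (-1:ℝ)^d * ((i+d).choose i : ℝ) * genBinom q (r-d)
      = genBinom (q - i - 1) r := by
  intro i
  induction i with
  | zero =>
    intro r
    induction r with
    | zero => intro q; simp [genBinom_zero]
    | succ r ihr =>
      intro q
      rw [Finset.sum_range_succ']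
      have e1 : ∀ d ∈ range (r+1),
          (-1:ℝ)^(d+1) * ((0+(d+1)).choose 0 : ℝ) * genBinom q (r+1-(d+1))
          = -((-1:ℝ)^d * ((0+d).choose 0 : ℝ) * genBinom q (r-d)) := by
        intro d _
        simp only [Nat.choose_zero_right, Nat.cast_one, Nat.add_sub_cancel, pow_succ]
        have : r+1-(d+1) = r-d := by omega
        rw [this]; ring
      rw [Finset.sum_congr rfl e1, Finset.sum_neg_distrib, ihr]
      have key : genBinom ((q-1)+1) (r+1) = genBinom (q-1) (r+1) + genBinom (q-1) r :=
        genBinom_pascal _ _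
      rw [sub_add_cancel] at key
      simp only [Nat.choose_zero_right, Nat.cast_one, pow_zero, Nat.sub_zero, one_mul, mul_one,
        Nat.cast_zero]
      norm_num
      linarith [key]
  | succ i ihi =>
    intro r
    induction r with
    | zero =>
      intro q; simp [genBinom_zero]
    | succ r ihr =>
      intro q
      have split : ∀ d ∈ range (r+1+1),
          (-1:ℝ)^d * (((i+1)+d).choose (i+1) : ℝ) * genBinom q (r+1-d)
          = (-1:ℝ)^d * ((i+d).choose i : ℝ) * genBinom q (r+1-d)
            + (-1:ℝ)^d * ((i+d).choose (i+1) : ℝ) * genBinom q (r+1-d) := by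
        intro d _
        have h : (i+1+d).choose (i+1) = (i+d).choose i + (i+d).choose (i+1) := by
          rw [show i+1+d = (i+d)+1 from by omega]
          exact Nat.choose_succ_succ _ _
        rw [h]; push_cast; ring
      rw [Finset.sum_congr rfl split, Finset.sum_add_distrib, ihi (r+1) q]
      have second : ∑ d ∈ range (r+1+1), (-1:ℝ)^d * ((i+d).choose (i+1) : ℝ) * genBinom q (r+1-d)
          = -genBinom (q - (i+1:ℕ) - 1) r := by
        rw [Finset.sum_range_succ']
        have e1 : ∀ d ∈ range (r+1),
            (-1:ℝ)^(d+1) * ((i+(d+1)).choose (i+1) : ℝ) * genBinom q (r+1-(d+1))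
            = -((-1:ℝ)^d * (((i+1)+d).choose (i+1) : ℝ) * genBinom q (r-d)) := by
          intro d _
          have h1 : i+(d+1) = (i+1)+d := by omega
          have h2 : r+1-(d+1) = r-d := by omega
          rw [h1, h2, pow_succ]; ring
        rw [Finset.sum_congr rfl e1, Finset.sum_neg_distrib, ihr q]
        simp [Nat.choose_succ_self]
      rw [second]
      have key : genBinom ((q - ((i:ℝ)+1) - 1) + 1) (r+1)
          = genBinom (q - ((i:ℝ)+1) - 1) (r+1) + genBinom (q - ((i:ℝ)+1) - 1) r :=
        genBinom_pascal _ _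
      have harg : (q - ((i:ℝ)+1) - 1) + 1 = q - i - 1 := by ring
      rw [harg] at key
      push_cast
      linarith [key]



lemma bern_eval (j : ℕ) (z : ℝ) :
    bern j z = ∑ i ∈ range (j+1), ((_root_.bernoulli i : ℚ) : ℝ) * (j.choose i : ℝ) * z^(j-i) := by
  simp [bern, Polynomial.bernoulli, Polynomial.aeval_monomial, mul_comm, mul_assoc, mul_left_comm]

lemma bern_zero' (x : ℝ) : bern 0 x = 1 := by simp [bern]

lemma bern_add (j : ℕ) (x y : ℝ) :
    bern j (x+y) = ∑ i ∈ range (j+1), (j.choose i : ℝ) * bern i x * y^(j-i) := by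
  rw [bern_eval]
  have rhs : ∑ i ∈ range (j+1), (j.choose i : ℝ) * bern i x * y^(j-i)
      = ∑ i ∈ range (j+1), ∑ l ∈ range (i+1),
          (j.choose i : ℝ) * (((_root_.bernoulli l : ℚ) : ℝ) * (i.choose l : ℝ) * x^(i-l)) * y^(j-i) := by
    refine Finset.sum_congr rfl fun i _ => ?_
    rw [bern_eval, Finset.mul_sum, Finset.sum_mul]
  rw [rhs]
  have lhs : ∑ i ∈ range (j+1), ((_root_.bernoulli i : ℚ) : ℝ) * (j.choose i : ℝ) * (x+y)^(j-i)
      = ∑ l ∈ range (j+1), ∑ u ∈ range (j-l+1),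
          ((_root_.bernoulli l : ℚ) : ℝ) * (j.choose l : ℝ) * ((j-l).choose u : ℝ) * x^u * y^(j-l-u) := by
    refine Finset.sum_congr rfl fun l _ => ?_
    rw [add_pow, Finset.mul_sum]
    refine Finset.sum_congr rfl fun u _ => ?_
    ring
  rw [lhs]
  rw [Finset.sum_sigma', Finset.sum_sigma']
  refine Finset.sum_nbij' (fun a => ⟨a.1 + a.2, a.1⟩) (fun b => ⟨b.2, b.1 - b.2⟩) ?_ ?_ ?_ ?_ ?_
  · rintro ⟨l, u⟩ h
    simp only [Finset.mem_sigma, Finset.mem_range] at *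
    omega
  · rintro ⟨i, l⟩ h
    simp only [Finset.mem_sigma, Finset.mem_range] at *
    omega
  · rintro ⟨l, u⟩ h
    simp
  · rintro ⟨i, l⟩ h
    simp only [Finset.mem_sigma, Finset.mem_range] at h
    have hli : l + (i - l) = i := by omega
    simp [hli]
  · rintro ⟨l, u⟩ h
    simp only [Finset.mem_sigma, Finset.mem_range] at h
    have h1 : l ≤ l + u := Nat.le_add_right _ _
    have h2 : l + u ≤ j := by omega
    have hc : (j.choose (l+u)) * ((l+u).choose l) = (j.choose l) * ((j-l).choose u) := by
      have := Nat.choose_mul (n := j) h1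
      rw [this, Nat.add_sub_cancel_left]
    have hcast : ((j.choose (l+u)) : ℝ) * (((l+u).choose l) : ℝ)
        = ((j.choose l) : ℝ) * (((j-l).choose u) : ℝ) := by
      rw [← Nat.cast_mul, ← Nat.cast_mul, hc]
    have e1 : l + u - l = u := by omega
    have e2 : j - (l + u) = j - l - u := by omega
    simp only [e1, e2]
    linear_combination (-((_root_.bernoulli l : ℚ) : ℝ) * x^u * y^(j-l-u)) * hcast





lemma sum_Icc_shift (f : ℕ → ℝ) (a N : ℕ) :
    ∑ j ∈ Icc a N, f j = ∑ d ∈ range (N+1-a), f (a+d) := by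
  refine Finset.sum_nbij' (fun j => j - a) (fun d => a + d) ?_ ?_ ?_ ?_ ?_
  · intro j hj; simp only [mem_Icc, mem_range] at *; omega
  · intro d hd; simp only [mem_Icc, mem_range] at *; omega
  · intro j hj; simp only [mem_Icc] at hj; omega
  · intro d hd; simp only [mem_range] at hd; omega
  · intro j hj; simp only [mem_Icc] at hj
    congr 1; omega

lemma inner_eval (p' s t : ℝ) (N : ℕ) (hN : 1 ≤ N) :
    ∑ j ∈ Icc 1 N, ∑ i ∈ range (j+1),
        (-1:ℝ)^(j+1) * (j.choose i : ℝ) * bern i s * t^(j-i) * genBinom p' (N-j) * t^(N-j)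
      = genBinom (p'-1) (N-1) * t^N
        + ∑ i ∈ Icc 1 N, (-1:ℝ)^(i+1) * bern i s * genBinom (p'-(i:ℝ)-1) (N-i) * t^(N-i) := by
  have hsplit : ∀ j ∈ Icc 1 N,
      ∑ i ∈ range (j+1),
        (-1:ℝ)^(j+1) * (j.choose i : ℝ) * bern i s * t^(j-i) * genBinom p' (N-j) * t^(N-j)
      = (-1:ℝ)^(j+1) * genBinom p' (N-j) * t^N
        + ∑ i ∈ range j,
            (-1:ℝ)^(j+1) * (j.choose (i+1) : ℝ) * bern (i+1) s * t^(j-(i+1)) * genBinom p' (N-j) * t^(N-j) := by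
    intro j hj
    simp only [mem_Icc] at hj
    rw [Finset.sum_range_succ']
    rw [add_comm]
    congr 1
    have ht : t^(j-0) * t^(N-j) = t^N := by
      rw [← pow_add]; congr 1; omega
    rw [bern_zero']
    simp only [Nat.choose_zero_right, Nat.cast_one]
    calc (-1:ℝ)^(j+1) * 1 * 1 * t^(j-0) * genBinom p' (N-j) * t^(N-j)
        = (-1:ℝ)^(j+1) * genBinom p' (N-j) * (t^(j-0) * t^(N-j)) := by ring
      _ = (-1:ℝ)^(j+1) * genBinom p' (N-j) * t^N := by rw [ht]
  rw [Finset.sum_congr rfl hsplit, Finset.sum_add_distrib]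
  congr 1
  · -- i = 0 part
    rw [sum_Icc_shift]
    have hr : N + 1 - 1 = (N-1) + 1 := by omega
    rw [hr]
    have e : ∀ d ∈ range ((N-1)+1),
        (-1:ℝ)^((1+d)+1) * genBinom p' (N-(1+d)) * t^N
        = ((-1:ℝ)^d * (((0:ℕ)+d).choose 0 : ℝ) * genBinom p' ((N-1)-d)) * t^N := by
      intro d hd
      have h1 : N - (1+d) = (N-1) - d := by omega
      have h2 : (-1:ℝ)^((1+d)+1) = (-1:ℝ)^d := by
        rw [show (1+d)+1 = d+2 from by omega, pow_add]; norm_num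
      rw [h1, h2]
      simp
    rw [Finset.sum_congr rfl e, ← Finset.sum_mul, genBinom_alt_sum 0 (N-1) p']
    norm_num
  · -- i ≥ 1 part
    have hinner : ∀ i ∈ Icc 1 N,
        (-1:ℝ)^(i+1) * bern i s * genBinom (p'-(i:ℝ)-1) (N-i) * t^(N-i)
        = ∑ j ∈ Icc i N,
            (-1:ℝ)^(j+1) * (j.choose i : ℝ) * bern i s * t^(j-i) * genBinom p' (N-j) * t^(N-j) := by
      intro i hi
      simp only [mem_Icc] at hi
      rw [sum_Icc_shift]
      have hr : N + 1 - i = (N-i) + 1 := by omega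
      rw [hr]
      have e : ∀ d ∈ range ((N-i)+1),
          (-1:ℝ)^((i+d)+1) * ((i+d).choose i : ℝ) * bern i s * t^((i+d)-i) * genBinom p' (N-(i+d)) * t^(N-(i+d))
          = ((-1:ℝ)^d * ((i+d).choose i : ℝ) * genBinom p' ((N-i)-d))
              * ((-1:ℝ)^(i+1) * bern i s * t^(N-i)) := by
        intro d hd
        simp only [mem_range] at hd
        have h1 : N - (i+d) = (N-i) - d := by omega
        have h2 : (i+d) - i = d := by omega
        have h3 : (-1:ℝ)^((i+d)+1) = (-1:ℝ)^d * (-1:ℝ)^(i+1) := by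
          rw [← pow_add]; congr 1; omega
        have h4 : t^d * t^((N-i)-d) = t^(N-i) := by
          rw [← pow_add]; congr 1; omega
        rw [h1, h2, h3, ← h4]
        ring
      rw [Finset.sum_congr rfl e, ← Finset.sum_mul, genBinom_alt_sum i (N-i) p']
      ring
    rw [Finset.sum_congr rfl hinner]
    rw [Finset.sum_sigma', Finset.sum_sigma']
    refine Finset.sum_nbij' (fun x => ⟨x.2 + 1, x.1⟩) (fun x => ⟨x.2, x.1 - 1⟩) ?_ ?_ ?_ ?_ ?_
    · rintro ⟨j, i⟩ h; simp only [mem_sigma, mem_Icc, mem_range] at *; omega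
    · rintro ⟨i, j⟩ h; simp only [mem_sigma, mem_Icc, mem_range] at *; omega
    · rintro ⟨j, i⟩ h; simp
    · rintro ⟨i, j⟩ h; simp only [mem_sigma, mem_Icc] at h
      have : i - 1 + 1 = i := by omega
      simp [this]
    · rintro ⟨j, i⟩ h
      rfl





lemma key (p s t : ℝ) (a : ℕ → ℝ)
    (ha : ∀ m : ℕ, (m:ℝ) * a m = p * ∑ i ∈ Icc 1 m, (-1:ℝ)^(i+1) * bern i s * a (m-i))
    (n : ℕ) (hn : 1 ≤ n) :
    (n:ℝ) * (∑ m ∈ range (n+1), a m * genBinom (p - (m:ℝ)) (n-m) * t^(n-m))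
    = p * ∑ j ∈ Icc 1 n, (-1:ℝ)^(j+1) * bern j (s+t) *
        (∑ m ∈ range (n-j+1), a m * genBinom (p - (m:ℝ)) (n-j-m) * t^(n-j-m)) := by
  set B1 : ℝ := ∑ m ∈ range n, a m * genBinom (p-(m:ℝ)-1) (n-m-1) * t^(n-m) with hB1
  set B2 : ℝ := ∑ m ∈ range (n+1), a m *
      ∑ i ∈ Icc 1 (n-m), (-1:ℝ)^(i+1) * bern i s * genBinom (p-(m:ℝ)-(i:ℝ)-1) (n-m-i) * t^(n-m-i)
    with hB2
  have hL : (n:ℝ) * (∑ m ∈ range (n+1), a m * genBinom (p - (m:ℝ)) (n-m) * t^(n-m))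
      = p * (B1 + B2) := by
    have hcast : ∀ m ∈ range (n+1), (n:ℝ) * (a m * genBinom (p-(m:ℝ)) (n-m) * t^(n-m))
        = (m:ℝ) * (a m * genBinom (p-(m:ℝ)) (n-m) * t^(n-m))
          + ((n-m:ℕ):ℝ) * (a m * genBinom (p-(m:ℝ)) (n-m) * t^(n-m)) := by
      intro m hm; simp only [mem_range] at hm
      have h1 : ((n-m:ℕ):ℝ) = (n:ℝ) - m := by
        rw [Nat.cast_sub (by omega)]
      rw [h1]; ring
    rw [Finset.mul_sum, Finset.sum_congr rfl hcast, Finset.sum_add_distrib]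
    have pieceB : ∑ m ∈ range (n+1), ((n-m:ℕ):ℝ) * (a m * genBinom (p-(m:ℝ)) (n-m) * t^(n-m))
        = ∑ m ∈ range n, (p-(m:ℝ)) * (a m * genBinom (p-(m:ℝ)-1) (n-m-1) * t^(n-m)) := by
      rw [Finset.sum_range_succ]
      simp only [Nat.sub_self, Nat.cast_zero, zero_mul, add_zero]
      refine Finset.sum_congr rfl fun m hm => ?_
      simp only [mem_range] at hm
      have hr' : n - m - 1 = n - m - 1 := rfl
      obtain ⟨r, hr⟩ : ∃ r, n - m = r + 1 := ⟨n-m-1, by omega⟩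
      have h2 : n - m - 1 = r := by omega
      rw [h2, hr]
      have hc : (((r+1:ℕ)):ℝ) = (r:ℝ)+1 := by push_cast; ring
      rw [hc]
      have hm2 := genBinom_mul (p-(m:ℝ)) r
      linear_combination (a m * t^(r+1)) * hm2
    have pascal : ∀ m ∈ range n,
        (m:ℝ) * (a m * genBinom (p-(m:ℝ)) (n-m) * t^(n-m))
        = (m:ℝ) * a m * genBinom (p-(m:ℝ)-1) (n-m) * t^(n-m)
          + (m:ℝ) * (a m * genBinom (p-(m:ℝ)-1) (n-m-1) * t^(n-m)) := by
      intro m hm; simp only [mem_range] at hm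
      obtain ⟨r, hr⟩ : ∃ r, n - m = r + 1 := ⟨n-m-1, by omega⟩
      have h2 : n - m - 1 = r := by omega
      rw [h2, hr]
      have hp := genBinom_pascal (p-(m:ℝ)-1) r
      rw [sub_add_cancel] at hp
      rw [hp]; ring
    have pieceA : ∑ m ∈ range (n+1), (m:ℝ) * (a m * genBinom (p-(m:ℝ)) (n-m) * t^(n-m))
        = (∑ m ∈ range (n+1), (m:ℝ) * a m * genBinom (p-(m:ℝ)-1) (n-m) * t^(n-m))
          + ∑ m ∈ range n, (m:ℝ) * (a m * genBinom (p-(m:ℝ)-1) (n-m-1) * t^(n-m)) := by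
      rw [Finset.sum_range_succ, Finset.sum_range_succ
        (f := fun m => (m:ℝ) * a m * genBinom (p-(m:ℝ)-1) (n-m) * t^(n-m)),
        Finset.sum_congr rfl pascal, Finset.sum_add_distrib]
      simp only [Nat.sub_self, genBinom_zero]
      ring
    rw [pieceA, pieceB]
    have combine : (∑ m ∈ range n, (m:ℝ) * (a m * genBinom (p-(m:ℝ)-1) (n-m-1) * t^(n-m)))
        + (∑ m ∈ range n, (p-(m:ℝ)) * (a m * genBinom (p-(m:ℝ)-1) (n-m-1) * t^(n-m)))
        = p * B1 := by
      rw [hB1, Finset.mul_sum, ← Finset.sum_add_distrib]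
      refine Finset.sum_congr rfl fun m hm => ?_
      ring
    have hS1 : ∑ m ∈ range (n+1), (m:ℝ) * a m * genBinom (p-(m:ℝ)-1) (n-m) * t^(n-m)
        = p * B2 := by
      have e : ∀ m ∈ range (n+1), (m:ℝ) * a m * genBinom (p-(m:ℝ)-1) (n-m) * t^(n-m)
          = p * ∑ i ∈ Icc 1 m,
              (-1:ℝ)^(i+1) * bern i s * a (m-i) * genBinom (p-(m:ℝ)-1) (n-m) * t^(n-m) := by
        intro m _
        have h := ha m
        calc (m:ℝ) * a m * genBinom (p-(m:ℝ)-1) (n-m) * t^(n-m)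
            = ((m:ℝ) * a m) * (genBinom (p-(m:ℝ)-1) (n-m) * t^(n-m)) := by ring
          _ = (p * ∑ i ∈ Icc 1 m, (-1:ℝ)^(i+1) * bern i s * a (m-i))
                * (genBinom (p-(m:ℝ)-1) (n-m) * t^(n-m)) := by rw [h]
          _ = p * ∑ i ∈ Icc 1 m,
                (-1:ℝ)^(i+1) * bern i s * a (m-i) * genBinom (p-(m:ℝ)-1) (n-m) * t^(n-m) := by
              rw [mul_assoc, Finset.sum_mul]
              congr 1
              exact Finset.sum_congr rfl fun i _ => by ring
      rw [Finset.sum_congr rfl e, ← Finset.mul_sum]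
      congr 1
      have hB2' : B2 = ∑ m' ∈ range (n+1), ∑ i ∈ Icc 1 (n-m'),
          a m' * ((-1:ℝ)^(i+1) * bern i s * genBinom (p-(m':ℝ)-(i:ℝ)-1) (n-m'-i) * t^(n-m'-i)) := by
        rw [hB2]
        exact Finset.sum_congr rfl fun m' _ => Finset.mul_sum _ _ _
      rw [hB2']
      rw [Finset.sum_sigma', Finset.sum_sigma']
      refine Finset.sum_nbij' (fun x => ⟨x.1 - x.2, x.2⟩) (fun x => ⟨x.1 + x.2, x.2⟩) ?_ ?_ ?_ ?_ ?_
      · rintro ⟨m, i⟩ h; simp only [mem_sigma, mem_range, mem_Icc] at *; omega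
      · rintro ⟨m, i⟩ h; simp only [mem_sigma, mem_range, mem_Icc] at *; omega
      · rintro ⟨m, i⟩ h; simp only [mem_sigma, mem_range, mem_Icc] at h
        have : m - i + i = m := by omega
        simp [this]
      · rintro ⟨m, i⟩ h; simp only [mem_sigma, mem_range, mem_Icc] at h
        have : m + i - i = m := by omega
        simp [this]
      · rintro ⟨m, i⟩ h
        simp only [mem_sigma, mem_range, mem_Icc] at h
        dsimp only
        have h1 : ((m-i:ℕ):ℝ) = (m:ℝ) - (i:ℝ) := by rw [Nat.cast_sub (by omega)]
        have h2 : n - (m-i) - i = n - m := by omega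
        have h3 : p - ((m:ℝ) - (i:ℝ)) - (i:ℝ) - 1 = p - (m:ℝ) - 1 := by ring
        rw [h1, h2, h3]
        ring
    rw [hS1]
    linarith [combine]
  rw [hL]
  have hR : p * ∑ j ∈ Icc 1 n, (-1:ℝ)^(j+1) * bern j (s+t) *
        (∑ m ∈ range (n-j+1), a m * genBinom (p - (m:ℝ)) (n-j-m) * t^(n-j-m))
      = p * (B1 + B2) := by
    congr 1
    have step1 : ∀ j ∈ Icc 1 n,
        (-1:ℝ)^(j+1) * bern j (s+t) *
          (∑ m ∈ range (n-j+1), a m * genBinom (p - (m:ℝ)) (n-j-m) * t^(n-j-m))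
        = ∑ m ∈ range (n-j+1), a m *
            ∑ i ∈ range (j+1),
              (-1:ℝ)^(j+1) * (j.choose i : ℝ) * bern i s * t^(j-i)
                * genBinom (p-(m:ℝ)) ((n-m)-j) * t^((n-m)-j) := by
      intro j hj
      simp only [mem_Icc] at hj
      rw [bern_add j s t, mul_assoc, Finset.sum_mul_sum]
      simp only [Finset.mul_sum]
      rw [Finset.sum_comm]
      refine Finset.sum_congr rfl fun m hm => Finset.sum_congr rfl fun i hi => ?_
      have h1 : n - j - m = n - m - j := by omega
      rw [h1]
      ring
    rw [Finset.sum_congr rfl step1]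
    -- swap j and m
    have swap : ∑ j ∈ Icc 1 n, ∑ m ∈ range (n-j+1),
          a m * ∑ i ∈ range (j+1),
            (-1:ℝ)^(j+1) * (j.choose i : ℝ) * bern i s * t^(j-i)
              * genBinom (p-(m:ℝ)) ((n-m)-j) * t^((n-m)-j)
        = ∑ m ∈ range (n+1), ∑ j ∈ Icc 1 (n-m),
            a m * ∑ i ∈ range (j+1),
              (-1:ℝ)^(j+1) * (j.choose i : ℝ) * bern i s * t^(j-i)
                * genBinom (p-(m:ℝ)) ((n-m)-j) * t^((n-m)-j) := by
      rw [Finset.sum_sigma', Finset.sum_sigma']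
      refine Finset.sum_nbij' (fun x => ⟨x.2, x.1⟩) (fun x => ⟨x.2, x.1⟩) ?_ ?_ ?_ ?_ ?_
      · rintro ⟨j, m⟩ h; simp only [mem_sigma, mem_range, mem_Icc] at *; omega
      · rintro ⟨m, j⟩ h; simp only [mem_sigma, mem_range, mem_Icc] at *; omega
      · rintro ⟨j, m⟩ h; rfl
      · rintro ⟨m, j⟩ h; rfl
      · rintro ⟨j, m⟩ h; rfl
    rw [swap]
    -- pull a m out of j-sum, peel m = n, apply inner_eval
    have factor : ∀ m ∈ range (n+1),
        ∑ j ∈ Icc 1 (n-m), a m * ∑ i ∈ range (j+1),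
            (-1:ℝ)^(j+1) * (j.choose i : ℝ) * bern i s * t^(j-i)
              * genBinom (p-(m:ℝ)) ((n-m)-j) * t^((n-m)-j)
        = a m * ∑ j ∈ Icc 1 (n-m), ∑ i ∈ range (j+1),
            (-1:ℝ)^(j+1) * (j.choose i : ℝ) * bern i s * t^(j-i)
              * genBinom (p-(m:ℝ)) ((n-m)-j) * t^((n-m)-j) := by
      intro m _
      rw [Finset.mul_sum]
    rw [Finset.sum_congr rfl factor]
    have evalm : ∀ m ∈ range n,
        a m * ∑ j ∈ Icc 1 (n-m), ∑ i ∈ range (j+1),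
            (-1:ℝ)^(j+1) * (j.choose i : ℝ) * bern i s * t^(j-i)
              * genBinom (p-(m:ℝ)) ((n-m)-j) * t^((n-m)-j)
        = a m * (genBinom (p-(m:ℝ)-1) (n-m-1) * t^(n-m))
          + a m * ∑ i ∈ Icc 1 (n-m),
              (-1:ℝ)^(i+1) * bern i s * genBinom (p-(m:ℝ)-(i:ℝ)-1) (n-m-i) * t^(n-m-i) := by
      intro m hm
      simp only [mem_range] at hm
      rw [inner_eval (p-(m:ℝ)) s t (n-m) (by omega)]
      ring
    rw [Finset.sum_range_succ, Finset.sum_congr rfl evalm, Finset.sum_add_distrib]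
    have last0 : a n * ∑ j ∈ Icc 1 (n-n), ∑ i ∈ range (j+1),
          (-1:ℝ)^(j+1) * (j.choose i : ℝ) * bern i s * t^(j-i)
            * genBinom (p-(n:ℝ)) ((n-n)-j) * t^((n-n)-j) = 0 := by
      rw [Nat.sub_self]
      simp
    rw [last0, add_zero]
    have part1 : ∑ m ∈ range n, a m * (genBinom (p-(m:ℝ)-1) (n-m-1) * t^(n-m)) = B1 := by
      rw [hB1]
      exact Finset.sum_congr rfl fun m _ => by ring
    have part2 : ∑ m ∈ range n, a m * ∑ i ∈ Icc 1 (n-m),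
          (-1:ℝ)^(i+1) * bern i s * genBinom (p-(m:ℝ)-(i:ℝ)-1) (n-m-i) * t^(n-m-i) = B2 := by
      rw [hB2, Finset.sum_range_succ, Nat.sub_self]
      simp
    rw [part1, part2]
  rw [hR]


lemma reflect_sum (q t : ℝ) (b : ℕ → ℝ) (N : ℕ) :
    ∑ k ∈ range (N+1), genBinom (q - (N:ℝ) + (k:ℝ)) k * b (N-k) * t^k
    = ∑ m ∈ range (N+1), b m * genBinom (q - (m:ℝ)) (N-m) * t^(N-m) := by
  rw [← Finset.sum_range_reflect]
  refine Finset.sum_congr rfl fun m hm => ?_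
  simp only [mem_range] at hm
  have h0 : N + 1 - 1 - m = N - m := by omega
  rw [h0]
  have h1 : ((N-m:ℕ):ℝ) = (N:ℝ) - (m:ℝ) := by rw [Nat.cast_sub (by omega)]
  have h2 : N - (N-m) = m := by omega
  rw [h1, h2]
  have h3 : q - (N:ℝ) + ((N:ℝ) - (m:ℝ)) = q - (m:ℝ) := by ring
  rw [h3]
  ring

theorem G_translation_identity
    (p s t : ℝ) (G : ℝ → ℕ → ℝ) (hG0 : ∀ u : ℝ, G u 0 = 1)
    (hG : ∀ (u : ℝ) (n : ℕ), 1 ≤ n →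
      G u n = (p / (n : ℝ)) *
        ∑ k ∈ Finset.Icc 1 n, (-1 : ℝ) ^ (k + 1) * bern k u * G u (n - k)) :
    ∀ n : ℕ,
      G (s + t) n =
        ∑ k ∈ Finset.range (n + 1),
          genBinom (p - (n : ℝ) + (k : ℝ)) k * G s (n - k) * t ^ k := by
  have ha : ∀ m : ℕ, (m:ℝ) * G s m
      = p * ∑ i ∈ Icc 1 m, (-1:ℝ)^(i+1) * bern i s * G s (m-i) := by
    intro m
    rcases Nat.eq_zero_or_pos m with hm | hm
    · subst hm; simp
    · rw [hG s m hm]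
      have hm0 : ((m:ℝ)) ≠ 0 := by positivity
      field_simp
  intro n
  induction n using Nat.strong_induction_on with
  | _ n ih =>
    rcases Nat.eq_zero_or_pos n with hn | hn
    · subst hn
      simp [hG0, genBinom_zero]
    · rw [hG (s+t) n hn]
      rw [reflect_sum p t (G s) n]
      have hrw : ∀ j ∈ Icc 1 n,
          (-1:ℝ)^(j+1) * bern j (s+t) * G (s+t) (n-j)
          = (-1:ℝ)^(j+1) * bern j (s+t) *
              (∑ m ∈ range ((n-j)+1), G s m * genBinom (p - (m:ℝ)) ((n-j)-m) * t^((n-j)-m)) := by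
        intro j hj
        simp only [mem_Icc] at hj
        rw [ih (n-j) (by omega), reflect_sum p t (G s) (n-j)]
      rw [Finset.sum_congr rfl hrw]
      have hkey := key p s t (G s) ha n hn
      have hn0 : ((n:ℝ)) ≠ 0 := by positivity
      rw [div_mul_eq_mul_div, div_eq_iff hn0]
      linear_combination -hkey
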